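/- If X is a consonant topological space, then A(K(X)) and K(A(X)) are homeomorphic via the map σ(𝒜) = {A closed | ∀K ∈ 𝒜, A ∩ K ≠ ∅}, with inverse τ(𝒦) = {K compact saturated | ∀A ∈ 𝒦, A ∩ K ≠ ∅}. -/
import Mathlib


open Set Topology

/-- The lower powerspace: closed subsets of `X`. -/
def LowerPS (X : Type*) [TopologicalSpace X] : Type _ := {A : Set X // IsClosed A}

/-- Lower Vietoris topology, generated by the sets `◇U = {A | A ∩ U ≠ ∅}` for `U` open. -/
instance (X : Type*) [TopologicalSpace X] : TopologicalSpace (LowerPS X) :=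
  .generateFrom {S | ∃ U : Set X, IsOpen U ∧ S = {A : LowerPS X | (A.1 ∩ U).Nonempty}}

/-- The upper powerspace: compact saturated subsets of `X`
(saturated = intersection of all open neighborhoods). -/
def UpperPS (X : Type*) [TopologicalSpace X] : Type _ :=
  {K : Set X // IsCompact K ∧ K = ⋂₀ {U : Set X | IsOpen U ∧ K ⊆ U}}

/-- Upper Vietoris topology, generated by the sets `□U = {K | K ⊆ U}` for `U` open. -/
instance (X : Type*) [TopologicalSpace X] : TopologicalSpace (UpperPS X) :=
  .generateFrom {S | ∃ U : Set X, IsOpen U ∧ S = {K : UpperPS X | K.1 ⊆ U}}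

/-- A `Π⁰₂` subset. -/
def IsPi02 {Y : Type*} [TopologicalSpace Y] (S : Set Y) : Prop :=
  ∃ U V : ℕ → Set Y, (∀ i, IsOpen (U i)) ∧ (∀ i, IsOpen (V i)) ∧
    ∀ y, y ∈ S ↔ ∀ i, y ∈ U i → y ∈ V i

/-- The Scott topology on `P(ω)`, generated by the sets `{x | F ⊆ x}` for finite `F`. -/
instance : TopologicalSpace (Set ℕ) :=
  .generateFrom {S | ∃ F : Finset ℕ, S = {x : Set ℕ | ↑F ⊆ x}}

/-- A space is quasi-Polish iff it is homeomorphic to a `Π⁰₂` subspace of `P(ω)`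
with the Scott topology. -/
def QuasiPolish (X : Type*) [TopologicalSpace X] : Prop :=
  ∃ S : Set (Set ℕ), IsPi02 S ∧ Nonempty (X ≃ₜ S)

/-- Scott-open subsets of a preorder. -/
def IsScottOpen {α : Type*} [Preorder α] (U : Set α) : Prop :=
  (∀ ⦃a b : α⦄, a ≤ b → a ∈ U → b ∈ U) ∧
  ∀ d : Set α, d.Nonempty → DirectedOn (· ≤ ·) d → ∀ a : α, IsLUB d a → a ∈ U →
    (d ∩ U).Nonempty

/-- The Scott topology on a preorder. -/
def scottTop (α : Type*) [Preorder α] : TopologicalSpace α := .generateFrom {U | IsScottOpen U}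

/-- The frame of open subsets of `X`, ordered by inclusion. -/
def OpensT (X : Type*) [TopologicalSpace X] : Type _ := {U : Set X // IsOpen U}

instance (X : Type*) [TopologicalSpace X] : PartialOrder (OpensT X) :=
  inferInstanceAs (PartialOrder {U : Set X // IsOpen U})

/-- `O(X)` carries the Scott topology. -/
instance (X : Type*) [TopologicalSpace X] : TopologicalSpace (OpensT X) := scottTop (OpensT X)

/-- `□◇U` in `K(A(X))`. -/
def boxDia {X : Type*} [TopologicalSpace X] (U : Set X) : Set (UpperPS (LowerPS X)) :=
  {𝒦 | ∀ A ∈ 𝒦.1, ((A : LowerPS X).1 ∩ U).Nonempty}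

/-- `◇□U` in `A(K(X))`. -/
def diaBox {X : Type*} [TopologicalSpace X] (U : Set X) : Set (LowerPS (UpperPS X)) :=
  {𝒜 | ∃ K ∈ 𝒜.1, (K : UpperPS X).1 ⊆ U}

/-- A space is consonant iff every Scott-open family of opens containing `U` contains
a compact-saturated filter neighborhood `▽K` of `U`. -/
def Consonant (X : Type*) [TopologicalSpace X] : Prop :=
  ∀ H : Set (OpensT X), IsScottOpen H → ∀ U ∈ H,
    ∃ K : UpperPS X, K.1 ⊆ U.1 ∧ ∀ V : OpensT X, K.1 ⊆ V.1 → V ∈ H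

/-- A space is co-consonant. -/
def CoConsonant (Y : Type*) [TopologicalSpace Y] : Prop :=
  ∀ H : Set (OpensT Y), IsScottOpen H → ∀ U ∈ H,
    ∃ F : Finset (Set Y), (∀ A ∈ F, IsClosed A) ∧ (∀ A ∈ F, (U.1 ∩ A).Nonempty) ∧
      ∀ V : OpensT Y, (∀ A ∈ F, (V.1 ∩ A).Nonempty) → V ∈ H


section Aux

open TopologicalSpace

variable {X : Type*} [TopologicalSpace X]

/-- `◇U` in `A(X)`. -/
def diaU (U : Set X) : Set (LowerPS X) := {A : LowerPS X | (A.1 ∩ U).Nonempty}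

/-- `□U` in `K(X)`. -/
def boxU (U : Set X) : Set (UpperPS X) := {K : UpperPS X | K.1 ⊆ U}

lemma isOpen_diaU {U : Set X} (h : IsOpen U) : IsOpen (diaU U) :=
  TopologicalSpace.GenerateOpen.basic _ ⟨U, h, rfl⟩

lemma isOpen_boxU {U : Set X} (h : IsOpen U) : IsOpen (boxU U) :=
  TopologicalSpace.GenerateOpen.basic _ ⟨U, h, rfl⟩

/-- Opens in the lower Vietoris topology are upward closed. -/
lemma lower_mono {𝒰 : Set (LowerPS X)} (h : IsOpen 𝒰) :
    ∀ A B : LowerPS X, A.1 ⊆ B.1 → A ∈ 𝒰 → B ∈ 𝒰 := by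
  have h' : TopologicalSpace.GenerateOpen
      {S | ∃ U : Set X, IsOpen U ∧ S = {A : LowerPS X | (A.1 ∩ U).Nonempty}} 𝒰 := h
  clear h
  induction h' with
  | basic s hs =>
    obtain ⟨U, hU, rfl⟩ := hs
    exact fun A B hAB ⟨x, hx1, hx2⟩ => ⟨x, hAB hx1, hx2⟩
  | univ => exact fun _ _ _ _ => trivial
  | inter s t hs ht ihs iht => exact fun A B hAB hA => ⟨ihs A B hAB hA.1, iht A B hAB hA.2⟩
  | sUnion S _ ih =>
    rintro A B hAB ⟨s, hs, hA⟩
    exact ⟨s, hs, ih s hs A B hAB hA⟩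

/-- Members of a compact saturated set of closed sets are upward closed. -/
lemma upper_mem_mono (𝒦 : UpperPS (LowerPS X)) {A B : LowerPS X}
    (hA : A ∈ 𝒦.1) (hAB : A.1 ⊆ B.1) : B ∈ 𝒦.1 := by
  rw [𝒦.2.2]
  rintro 𝒰 ⟨h𝒰, hsub⟩
  exact lower_mono h𝒰 A B hAB (hsub hA)

/-- Basic neighborhoods in the upper powerspace. -/
lemma upper_nbhd {𝒲 : Set (UpperPS X)} (h𝒲 : IsOpen 𝒲) {K : UpperPS X} (hK : K ∈ 𝒲) :
    ∃ U : Set X, IsOpen U ∧ K.1 ⊆ U ∧ boxU U ⊆ 𝒲 := by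
  obtain ⟨v, ⟨f, ⟨hfin, hsub⟩, rfl⟩, hKv, hv⟩ :=
    (isTopologicalBasis_of_subbasis
      (s := {S | ∃ U : Set X, IsOpen U ∧ S = {K : UpperPS X | K.1 ⊆ U}})
      rfl).exists_subset_of_mem_open hK h𝒲
  have hsub' : ∀ w ∈ f, ∃ U : Set X, IsOpen U ∧ w = {K : UpperPS X | K.1 ⊆ U} :=
    fun w hw => hsub hw
  choose! u hu1 hu2 using hsub'
  refine ⟨⋂ w ∈ f, u w, hfin.isOpen_biInter fun w hw => hu1 w hw, ?_, ?_⟩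
  · refine Set.subset_iInter₂ fun w hw => ?_
    have := hKv w hw
    rw [hu2 w hw] at this
    exact this
  · intro K' hK'
    refine hv ?_
    intro w hw
    rw [hu2 w hw]
    exact fun x hx => (Set.biInter_subset_of_mem hw) (hK' hx)

/-- Basic neighborhoods in the lower powerspace. -/
lemma lower_nbhd {𝒰 : Set (LowerPS X)} (h : IsOpen 𝒰) {A : LowerPS X} (hA : A ∈ 𝒰) :
    ∃ F : Set (Set X), F.Finite ∧ (∀ U ∈ F, IsOpen U) ∧
      A ∈ ⋂ U ∈ F, diaU U ∧ (⋂ U ∈ F, diaU U) ⊆ 𝒰 := by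
  obtain ⟨v, ⟨f, ⟨hfin, hsub⟩, rfl⟩, hAv, hv⟩ :=
    (isTopologicalBasis_of_subbasis
      (s := {S | ∃ U : Set X, IsOpen U ∧ S = {A : LowerPS X | (A.1 ∩ U).Nonempty}})
      rfl).exists_subset_of_mem_open hA h
  have hsub' : ∀ w ∈ f, ∃ U : Set X, IsOpen U ∧ w = {A : LowerPS X | (A.1 ∩ U).Nonempty} :=
    fun w hw => hsub hw
  choose! u hu1 hu2 using hsub'
  have hiff : ∀ w ∈ f, w = diaU (u w) := fun w hw => hu2 w hw
  refine ⟨u '' f, hfin.image u, ?_, ?_, ?_⟩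
  · rintro U ⟨w, hw, rfl⟩; exact hu1 w hw
  · refine Set.mem_iInter₂.2 ?_
    rintro U ⟨w, hw, rfl⟩
    have := hAv w hw
    rwa [hiff w hw] at this
  · intro B hB
    refine hv fun w hw => ?_
    rw [hiff w hw]
    exact Set.mem_iInter₂.1 hB (u w) ⟨w, hw, rfl⟩

lemma directed_bound {α : Type*} [Preorder α] {d : Set α} (hd : DirectedOn (· ≤ ·) d)
    (hne : d.Nonempty) (t : Finset α) (ht : ∀ a ∈ t, a ∈ d) :
    ∃ b ∈ d, ∀ a ∈ t, a ≤ b := by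
  classical
  induction t using Finset.induction with
  | empty => exact ⟨hne.choose, hne.choose_spec, by simp⟩
  | @insert c s hcs ih =>
    obtain ⟨b, hb, hball⟩ := ih fun a ha => ht a (Finset.mem_insert_of_mem ha)
    obtain ⟨b', hb', hcb', hbb'⟩ := hd c (ht c (Finset.mem_insert_self c s)) b hb
    refine ⟨b', hb', fun a ha => ?_⟩
    rcases Finset.mem_insert.1 ha with rfl | ha
    · exact hcb'
    · exact (hball a ha).trans hbb'

/-- The family of opens meeting every member of `𝒦` is Scott open. -/
lemma scottH (𝒦 : UpperPS (LowerPS X)) :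
    IsScottOpen {V : OpensT X | ∀ A ∈ 𝒦.1, (A.1 ∩ V.1).Nonempty} := by
  constructor
  · rintro a b hab ha A hA
    obtain ⟨x, hx1, hx2⟩ := ha A hA
    exact ⟨x, hx1, hab hx2⟩
  · intro d hdne hdir a hlub ha
    have hub : a.1 ⊆ ⋃ V ∈ d, V.1 := by
      have : a ≤ ⟨⋃ V ∈ d, V.1, isOpen_biUnion fun V _ => V.2⟩ :=
        hlub.2 fun V hV => Set.subset_biUnion_of_mem (u := fun (V : OpensT X) => V.1) hV
      exact this
    have hcover : 𝒦.1 ⊆ ⋃ V : d, diaU (V.1).1 := by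
      intro A hA
      obtain ⟨x, hx1, hx2⟩ := ha A hA
      obtain ⟨V, hV, hxV⟩ := Set.mem_iUnion₂.1 (hub hx2)
      exact Set.mem_iUnion.2 ⟨⟨V, hV⟩, ⟨x, hx1, hxV⟩⟩
    obtain ⟨t, ht⟩ := 𝒦.2.1.elim_finite_subcover (fun V : d => diaU (V.1).1)
      (fun V => isOpen_diaU V.1.2) hcover
    classical
    obtain ⟨b, hb, hball⟩ := directed_bound hdir hdne (t.image Subtype.val)
      (by rintro a ha; obtain ⟨i, _, rfl⟩ := Finset.mem_image.1 ha; exact i.2)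
    refine ⟨b, hb, fun A hA => ?_⟩
    obtain ⟨i, hit, hAi⟩ := Set.mem_iUnion₂.1 (ht hA)
    obtain ⟨x, hx1, hx2⟩ := hAi
    exact ⟨x, hx1, hball i.1 (Finset.mem_image_of_mem _ hit) hx2⟩

/-- Key consequence of consonance. -/
lemma consonance_key (hcons : Consonant X) (𝒦 : UpperPS (LowerPS X)) {U : Set X}
    (hU : IsOpen U) (h : ∀ A ∈ 𝒦.1, (A.1 ∩ U).Nonempty) :
    ∃ K : UpperPS X, K.1 ⊆ U ∧ ∀ A ∈ 𝒦.1, (A.1 ∩ K.1).Nonempty := by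
  obtain ⟨K, hK1, hK2⟩ := hcons _ (scottH 𝒦) ⟨U, hU⟩ h
  refine ⟨K, hK1, fun A hA => ?_⟩
  by_contra hc
  rw [Set.not_nonempty_iff_eq_empty] at hc
  have hsub : K.1 ⊆ A.1ᶜ := by
    intro x hx hxA
    exact absurd (hc ▸ (⟨hxA, hx⟩ : x ∈ A.1 ∩ K.1)) (Set.notMem_empty x)
  have := hK2 ⟨A.1ᶜ, A.2.isOpen_compl⟩ hsub A hA
  simp at this

end Aux
/-- If `X` is consonant then `A(K(X))` and `K(A(X))` are homeomorphic via `σ`, with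
inverse `τ`. -/
theorem consonant_AK_KA_homeomorph (X : Type*) [TopologicalSpace X]
    (hcons : Consonant X)
    (σ : LowerPS (UpperPS X) → UpperPS (LowerPS X))
    (hσ : ∀ 𝒜, (σ 𝒜).1 =
        {A : LowerPS X | ∀ K ∈ 𝒜.1, (A.1 ∩ (K : UpperPS X).1).Nonempty})
    (τ : UpperPS (LowerPS X) → LowerPS (UpperPS X))
    (hτ : ∀ 𝒦, (τ 𝒦).1 =
        {K : UpperPS X | ∀ A ∈ 𝒦.1, ((A : LowerPS X).1 ∩ K.1).Nonempty}) :
    ∃ h : LowerPS (UpperPS X) ≃ₜ UpperPS (LowerPS X),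
      (∀ 𝒜, h 𝒜 = σ 𝒜) ∧ ∀ 𝒦, h.symm 𝒦 = τ 𝒦 := by
  classical
  have hσmem : ∀ (𝒜 : LowerPS (UpperPS X)) (B : LowerPS X),
      B ∈ (σ 𝒜).1 ↔ ∀ K ∈ 𝒜.1, (B.1 ∩ (K : UpperPS X).1).Nonempty := by
    intro 𝒜 B
    rw [hσ]
    exact Iff.rfl
  have hτmem : ∀ (𝒦 : UpperPS (LowerPS X)) (K : UpperPS X),
      K ∈ (τ 𝒦).1 ↔ ∀ A ∈ 𝒦.1, ((A : LowerPS X).1 ∩ K.1).Nonempty := by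
    intro 𝒦 K
    rw [hτ]
    exact Iff.rfl
  -- τ ∘ σ = id
  have hleft : ∀ 𝒜, τ (σ 𝒜) = 𝒜 := by
    intro 𝒜
    apply Subtype.ext
    rw [hτ]
    ext K
    simp only [Set.mem_setOf_eq]
    constructor
    · intro h
      by_contra hK
      obtain ⟨U, hUo, hKU, hbox⟩ := upper_nbhd 𝒜.2.isOpen_compl hK
      have hUc : (⟨Uᶜ, hUo.isClosed_compl⟩ : LowerPS X) ∈ (σ 𝒜).1 := by
        refine (hσmem _ _).2 ?_
        intro K' hK'
        by_contra hc
        rw [Set.not_nonempty_iff_eq_empty] at hc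
        have hsub : K'.1 ⊆ U := by
          intro x hx
          by_contra hxU
          exact absurd (hc ▸ (⟨hxU, hx⟩ : x ∈ Uᶜ ∩ K'.1)) (Set.notMem_empty x)
        exact hbox hsub hK'
      obtain ⟨x, hx1, hx2⟩ := h _ hUc
      exact hx1 (hKU hx2)
    · intro hK A hA
      exact (hσmem _ _).1 hA K hK
  -- σ ∘ τ = id
  have hright : ∀ 𝒦, σ (τ 𝒦) = 𝒦 := by
    intro 𝒦
    apply Subtype.ext
    rw [hσ]
    ext A
    simp only [Set.mem_setOf_eq]
    constructor
    · intro h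
      by_contra hA
      have h2 := 𝒦.2.2
      rw [h2, Set.mem_sInter] at hA
      push_neg at hA
      obtain ⟨𝒰, ⟨h𝒰o, h𝒰s⟩, hA𝒰⟩ := hA
      have hAll : ∀ A' ∈ 𝒦.1, (A'.1 ∩ A.1ᶜ).Nonempty := by
        intro A' hA'
        by_contra hc
        rw [Set.not_nonempty_iff_eq_empty] at hc
        have hsub : A'.1 ⊆ A.1 := by
          intro x hx
          by_contra hxA
          exact absurd (hc ▸ (⟨hx, hxA⟩ : x ∈ A'.1 ∩ A.1ᶜ)) (Set.notMem_empty x)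
        exact hA𝒰 (lower_mono h𝒰o A' A hsub (h𝒰s hA'))
      obtain ⟨K, hK1, hK2⟩ := consonance_key hcons 𝒦 A.2.isOpen_compl hAll
      have hKτ : K ∈ (τ 𝒦).1 := (hτmem _ _).2 hK2
      obtain ⟨x, hx1, hx2⟩ := h K hKτ
      exact hK1 hx2 hx1
    · intro hA K hK
      exact (hτmem _ _).1 hK A hA
  -- continuity of σ
  have hσcont : Continuous σ := by
    apply continuous_generateFrom_iff.mpr
    rintro S ⟨𝒰, h𝒰, rfl⟩
    rw [isOpen_iff_forall_mem_open]
    intro 𝒜 h𝒜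
    simp only [Set.mem_preimage, Set.mem_setOf_eq] at h𝒜
    -- cover σ𝒜 by finitely many basic opens inside 𝒰
    have hnb := fun A : (σ 𝒜).1 => lower_nbhd h𝒰 (h𝒜 A.2)
    choose F hFfin hFopen hmem hBsub using hnb
    obtain ⟨t, ht⟩ := (σ 𝒜).2.1.elim_finite_subcover
      (fun A : (σ 𝒜).1 => ⋂ U ∈ F A, diaU U)
      (fun A => (hFfin A).isOpen_biInter fun U hU => isOpen_diaU (hFopen A U hU))
      (fun A hA => Set.mem_iUnion.2 ⟨⟨A, hA⟩, hmem ⟨A, hA⟩⟩)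
    -- selections
    set Sel : Set ({A : (σ 𝒜).1 // A ∈ t} → Set X) := Set.pi Set.univ (fun i => F i.1) with hSel
    have hSelFin : Sel.Finite := Set.Finite.pi fun i => hFfin i.1
    set W : ({A : (σ 𝒜).1 // A ∈ t} → Set X) → Set X := fun g => ⋃ i, g i with hW
    refine ⟨⋂ g ∈ Sel, diaU (X := UpperPS X) (boxU (W g)), ?_, ?_, ?_⟩
    · -- subset of preimage
      intro 𝒜' h𝒜'
      simp only [Set.mem_preimage, Set.mem_setOf_eq]
      intro A hA
      have hAσ := (hσmem _ _).1 hA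
      by_contra hAU
      -- A is in no basic piece, pick a selection avoiding A
      have hsel : ∀ i : {A : (σ 𝒜).1 // A ∈ t}, ∃ U ∈ F i.1, A.1 ∩ U = ∅ := by
        intro i
        by_contra hcon
        push_neg at hcon
        have : A ∈ ⋂ U ∈ F i.1, diaU U :=
          Set.mem_iInter₂.2 fun U hU => hcon U hU
        exact hAU (hBsub i.1 this)
      choose g hg1 hg2 using hsel
      have hgSel : g ∈ Sel := fun i _ => hg1 i
      have h𝒜'g := Set.mem_iInter₂.1 h𝒜' g hgSel
      obtain ⟨K, hK1, hK2⟩ := h𝒜'g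
      obtain ⟨x, hxA, hxK⟩ := hAσ K hK1
      obtain ⟨i, hxi⟩ := Set.mem_iUnion.1 (hK2 hxK)
      exact absurd ((hg2 i) ▸ (⟨hxA, hxi⟩ : x ∈ A.1 ∩ g i)) (Set.notMem_empty x)
    · -- open
      exact hSelFin.isOpen_biInter fun g hg =>
        isOpen_diaU (isOpen_boxU (isOpen_iUnion fun i => hFopen i.1 (g i) (hg i trivial)))
    · -- 𝒜 belongs
      refine Set.mem_iInter₂.2 fun g hg => ?_
      have hWopen : IsOpen (W g) := isOpen_iUnion fun i => hFopen i.1 (g i) (hg i trivial)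
      have hC : (⟨(W g)ᶜ, hWopen.isClosed_compl⟩ : LowerPS X) ∉ (σ 𝒜).1 := by
        intro hmemC
        obtain ⟨i, hit, hCi⟩ := Set.mem_iUnion₂.1 (ht hmemC)
        have := Set.mem_iInter₂.1 hCi (g ⟨i, hit⟩) (hg ⟨i, hit⟩ trivial)
        obtain ⟨x, hx1, hx2⟩ := this
        exact hx1 (Set.mem_iUnion.2 ⟨⟨i, hit⟩, hx2⟩)
      have hC' : ¬ ∀ K ∈ 𝒜.1, (((W g)ᶜ : Set X) ∩ K.1).Nonempty := fun hall =>
        hC ((hσmem _ _).2 hall)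
      push_neg at hC'
      obtain ⟨K, hK1, hK2⟩ := hC'
      refine ⟨K, hK1, ?_⟩
      intro x hx
      by_contra hxW
      exact absurd (hK2 ▸ (⟨hxW, hx⟩ : x ∈ (W g)ᶜ ∩ K.1)) (Set.notMem_empty x)
  -- continuity of τ
  have hτcont : Continuous τ := by
    apply continuous_generateFrom_iff.mpr
    rintro S ⟨𝒱, h𝒱, rfl⟩
    have heq : τ ⁻¹' {𝒜 : LowerPS (UpperPS X) | (𝒜.1 ∩ 𝒱).Nonempty} =
        ⋃ U ∈ {U : Set X | IsOpen U ∧ boxU U ⊆ 𝒱},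
          {𝒦 : UpperPS (LowerPS X) | ∀ A ∈ 𝒦.1, (A.1 ∩ U).Nonempty} := by
      ext 𝒦
      simp only [Set.mem_preimage, Set.mem_setOf_eq, Set.mem_iUnion]
      constructor
      · rintro ⟨K, hK1, hK2⟩
        have hK1 := (hτmem _ _).1 hK1
        obtain ⟨U, hUo, hKU, hbox⟩ := upper_nbhd h𝒱 hK2
        refine ⟨U, ⟨hUo, hbox⟩, fun A hA => ?_⟩
        obtain ⟨x, hx1, hx2⟩ := hK1 A hA
        exact ⟨x, hx1, hKU hx2⟩
      · rintro ⟨U, ⟨hUo, hbox⟩, hAll⟩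
        obtain ⟨K, hK1, hK2⟩ := consonance_key hcons 𝒦 hUo hAll
        exact ⟨K, (hτmem _ _).2 hK2, hbox hK1⟩
    rw [heq]
    refine isOpen_biUnion fun U hU => ?_
    exact TopologicalSpace.GenerateOpen.basic _ ⟨diaU U, isOpen_diaU hU.1, rfl⟩
  exact ⟨⟨⟨σ, τ, hleft, hright⟩, hσcont, hτcont⟩, fun _ => rfl, fun _ => rfl⟩
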